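/- Let p be a prime, k a field of characteristic p, and R⟨Y⟩ a semifree Γ-extension of a local ring (R,m,k). There is a short exact sequence of graded k-vector spaces 0 → kY^{(p^∞)} → ind R⟨Y⟩ → Γ-ind R⟨Y⟩ → 0, where kY^{(p^∞)} is spanned by the residue classes of y^{(p^i)} for even-degree y ∈ Y and i ≥ 1. -/

import Mathlib

/-- Index type for the normal `Γ`-monomials of a semifree `Γ`-extension: finitely
supported exponent vectors, with exponent at most `1` at the exterior (odd-degree)
variables. -/
def NormalMono (Y : Type*) (evenVar : Y → Prop) : Type _ :=
  {f : Y →₀ ℕ // ∀ y : Y, ¬ evenVar y → f y ≤ 1}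

/-- The (divided-power) weight of a `Γ`-monomial: the sum of its exponents. -/
def monoWeight {Y : Type*} (f : Y →₀ ℕ) : ℕ := f.sum fun _ n => n

/-- An abstract model of (the underlying algebra of) a semifree `Γ`-extension
`R⟨Y⟩` of a local ring `R`:  a commutative `R`-algebra `A`, with a set of variables
indexed by `Y` (split into divided-power variables `evenVar` and exterior ones),
such that the normal `Γ`-monomials `y₁^(i₁) ⋯ yₙ^(iₙ)` form an `R`-basis, the monomial
of weight zero is `1`, the product of two normal monomials is an integer multiple of
the normal monomial obtained by adding exponents (and is `0` if the exponents are not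
admissible), divided powers of a single divided-power variable multiply by the rule
`y^(n) · y^(m) = C(n+m, n) · y^(n+m)`, and normal monomials in disjoint sets of
variables multiply to a unit multiple of their concatenation. -/
structure GammaExt (R : Type*) [CommRing R] (A : Type*) [CommRing A] [Algebra R A] where
  /-- the set of `Γ`-variables -/
  Y : Type*
  /-- which variables are divided-power (even-degree) variables -/
  evenVar : Y → Prop
  /-- the normal `Γ`-monomials form an `R`-basis of `A` -/
  basis : Module.Basis (NormalMono Y evenVar) R A
  basis_zero : ∀ f : NormalMono Y evenVar, f.1 = 0 → basis f = 1
  mul_basis : ∀ f g h : NormalMono Y evenVar, h.1 = f.1 + g.1 →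
    ∃ c : ℤ, basis f * basis g = c • basis h
  mul_basis_zero : ∀ f g : NormalMono Y evenVar,
    (∀ h : NormalMono Y evenVar, h.1 ≠ f.1 + g.1) → basis f * basis g = 0
  mul_single : ∀ (y : Y), evenVar y → ∀ (n m : ℕ) (f g h : NormalMono Y evenVar),
    f.1 = Finsupp.single y n → g.1 = Finsupp.single y m →
    h.1 = Finsupp.single y (n + m) →
    basis f * basis g = (((n + m).choose n : ℤ)) • basis h
  mul_disjoint : ∀ f g h : NormalMono Y evenVar,
    Disjoint f.1.support g.1.support → h.1 = f.1 + g.1 →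
    ∃ c : ℤˣ, basis f * basis g = (c : ℤ) • basis h


open IsLocalRing

private lemma lucas_pow_mul (p : ℕ) [Fact p.Prime] (j m : ℕ) :
    ((p ^ j * m).choose (p ^ j)) ≡ m [MOD p] := by
  have hp : 2 ≤ p := (Fact.out : p.Prime).two_le
  induction j with
  | zero => simpa using Nat.ModEq.refl m
  | succ j ih =>
    have h := Choose.choose_modEq_choose_mod_mul_choose_div_nat
      (p := p) (n := p ^ (j + 1) * m) (k := p ^ (j + 1))
    have h1 : p ^ (j + 1) * m % p = 0 := by
      have : p ∣ p ^ (j + 1) * m := Dvd.dvd.mul_right (dvd_pow_self p (Nat.succ_ne_zero j)) m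
      omega
    have h2 : p ^ (j + 1) % p = 0 := by
      have : p ∣ p ^ (j + 1) := dvd_pow_self p (Nat.succ_ne_zero j)
      omega
    have h3 : p ^ (j + 1) * m / p = p ^ j * m := by
      rw [pow_succ, mul_comm (p ^ j) p, mul_assoc]
      exact Nat.mul_div_cancel_left _ (by omega)
    have h4 : p ^ (j + 1) / p = p ^ j := by
      rw [pow_succ, mul_comm]
      exact Nat.mul_div_cancel_left _ (by omega)
    rw [h1, h2, h3, h4, Nat.choose_zero_right, one_mul] at h
    exact h.trans ih

private lemma exists_choose_not_dvd {p n : ℕ} (hp : p.Prime) (hn : 2 ≤ n)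
    (h : ∀ i : ℕ, n ≠ p ^ i) : ∃ a, 0 < a ∧ a < n ∧ ¬ p ∣ n.choose a := by
  haveI : Fact p.Prime := ⟨hp⟩
  set j := n.factorization p with hj
  set m := n / p ^ j with hm
  have hmn : p ^ j * m = n := Nat.ordProj_mul_ordCompl_eq_self n p
  have hpm : ¬ p ∣ m := Nat.not_dvd_ordCompl hp (by omega)
  have hm2 : 2 ≤ m := by
    rcases Nat.lt_or_ge m 2 with h' | h'
    · interval_cases m
      · omega
      · exact absurd (by omega : n = p ^ j) (h j)
    · exact h'
  refine ⟨p ^ j, Nat.pow_pos (n := j) hp.pos, ?_, ?_⟩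
  · calc p ^ j = p ^ j * 1 := (mul_one _).symm
      _ < p ^ j * m := by
        have := Nat.pow_pos (n := j) hp.pos
        exact Nat.mul_lt_mul_of_le_of_lt le_rfl (by omega) this
      _ = n := hmn
  · intro hd
    have hmod := lucas_pow_mul p j m
    rw [hmn] at hmod
    have : n.choose (p ^ j) % p = m % p := hmod
    have hm0 : m % p = 0 := by omega
    exact hpm (Nat.dvd_of_mod_eq_zero hm0)

private lemma monoWeight_single {Y : Type*} (y : Y) (n : ℕ) :
    monoWeight (Finsupp.single y n) = n := by
  simp [monoWeight, Finsupp.sum_single_index]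

private lemma le_monoWeight {Y : Type*} (f : Y →₀ ℕ) (y : Y) :
    f y ≤ monoWeight f := by
  by_cases hy : y ∈ f.support
  · exact Finset.single_le_sum (fun i _ => Nat.zero_le _) hy
  · simp [Finsupp.notMem_support_iff.mp hy]

private lemma add_eq_single_left {Y : Type*} {f g : Y →₀ ℕ} {y : Y} {n : ℕ}
    (h : f + g = Finsupp.single y n) : f = Finsupp.single y (f y) := by
  ext z
  rcases eq_or_ne z y with rfl | hz
  · simp
  · have h1 := DFunLike.congr_fun h z
    simp only [Finsupp.add_apply, Finsupp.single_eq_of_ne' (Ne.symm hz)] at h1 ⊢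
    omega

private lemma monoWeight_add {Y : Type*} (f g : Y →₀ ℕ) :
    monoWeight (f + g) = monoWeight f + monoWeight g :=
  Finsupp.sum_add_index' (fun _ => rfl) (fun _ _ _ => rfl)

private lemma natCast_mem_maximalIdeal {R : Type*} [CommRing R] [IsLocalRing R]
    {p : ℕ} [CharP (ResidueField R) p] {c : ℕ} (h : p ∣ c) :
    (c : R) ∈ maximalIdeal R := by
  have : (residue R) (c : R) = 0 := by
    rw [map_natCast]
    exact (CharP.cast_eq_zero_iff (ResidueField R) p c).mpr h
  exact (Ideal.Quotient.eq_zero_iff_mem).mp this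

private lemma isUnit_natCast_of_not_dvd {R : Type*} [CommRing R] [IsLocalRing R]
    {p : ℕ} [CharP (ResidueField R) p] {c : ℕ} (h : ¬ p ∣ c) :
    IsUnit (c : R) := by
  by_contra hc
  have : (c : R) ∈ maximalIdeal R := hc
  have : (residue R) (c : R) = 0 := Ideal.Quotient.eq_zero_iff_mem.mpr this
  rw [map_natCast] at this
  exact h ((CharP.cast_eq_zero_iff (ResidueField R) p c).mp this)


/-- Let `p` be a prime, `(R, m, k)` a local ring with `char k = p`, and `A = R⟨Y⟩` a
semifree `Γ`-extension of `R`.  There is a short exact sequence of (graded) `k`-vector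
spaces `0 → kY^(p^∞) → ind R⟨Y⟩ → Γ-ind R⟨Y⟩ → 0`, where `kY^(p^∞)` is spanned by the
classes of the divided powers `y^(p^i)`, `y ∈ Y` even, `i ≥ 1`.  Writing
`ind = m_A/(m·A + m_A²)` and `Γ-ind = m_A/(m·A + m_A^(2))`, this is encoded by:
the denominator `D_ind = m·A + m_A²` of `ind` is contained in the denominator
`D_Γind = m·A + m_A^(2)` of `Γ-ind` (surjectivity of `ind → Γ-ind`); together with the
span `P` of the monomials `y^(p^i)` it fills `D_Γind` (exactness in the middle); and
`P` meets `D_ind` only in `m·P` (injectivity of `kY^(p^∞) → ind`). -/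

theorem stmt_17 {R A : Type*} [CommRing R] [CommRing A] [Algebra R A] [IsLocalRing R]
    (p : ℕ) (hp : p.Prime) [CharP (IsLocalRing.ResidueField R) p]
    (E : GammaExt R A)
    (mRA Dind DGind P : Submodule R A)
    (hmRA : mRA = IsLocalRing.maximalIdeal R • (⊤ : Submodule R A))
    (hDind : Dind = mRA ⊔ Submodule.span R
      {x : A | ∃ f g : NormalMono E.Y E.evenVar,
        1 ≤ monoWeight f.1 ∧ 1 ≤ monoWeight g.1 ∧ x = E.basis f * E.basis g})
    (hDGind : DGind = mRA ⊔ Submodule.span R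
      {x : A | ∃ f : NormalMono E.Y E.evenVar, 2 ≤ monoWeight f.1 ∧ x = E.basis f})
    (hP : P = Submodule.span R
      {x : A | ∃ (y : E.Y) (i : ℕ) (f : NormalMono E.Y E.evenVar),
        E.evenVar y ∧ 1 ≤ i ∧ f.1 = Finsupp.single y (p ^ i) ∧ x = E.basis f}) :
    Dind ≤ DGind ∧ Dind ⊔ P = DGind ∧
      P ⊓ Dind ≤ IsLocalRing.maximalIdeal R • P := by

  classical
  have hp2 : 2 ≤ p := hp.two_le
  -- p is in the maximal ideal
  -- Part 1 : Dind ≤ DGind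
  have key1 : Dind ≤ DGind := by
    rw [hDind, hDGind]
    refine sup_le le_sup_left ?_
    rw [Submodule.span_le]
    rintro x ⟨f, g, hf, hg, rfl⟩
    by_cases hc : ∃ h : NormalMono E.Y E.evenVar, h.1 = f.1 + g.1
    · obtain ⟨h, hh⟩ := hc
      obtain ⟨c, hc⟩ := E.mul_basis f g h hh
      rw [hc]
      have hbh : E.basis h ∈ mRA ⊔ Submodule.span R
          {x : A | ∃ f : NormalMono E.Y E.evenVar, 2 ≤ monoWeight f.1 ∧ x = E.basis f} := by
        refine Submodule.mem_sup_right (Submodule.subset_span ⟨h, ?_, rfl⟩)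
        rw [hh, monoWeight_add]; omega
      exact zsmul_mem hbh c
    · push_neg at hc
      rw [E.mul_basis_zero f g hc]
      exact Submodule.zero_mem _
  -- every basis monomial of weight ≥ 2 lies in Dind ⊔ P
  have keyGen : ∀ f : NormalMono E.Y E.evenVar, 2 ≤ monoWeight f.1 →
      E.basis f ∈ Dind ⊔ P := by
    intro f hw
    have hsupp : f.1.support.Nonempty := by
      by_contra hemp
      rw [Finset.not_nonempty_iff_eq_empty, Finsupp.support_eq_empty] at hemp
      rw [hemp] at hw
      simp [monoWeight] at hw
    obtain ⟨y, hy⟩ := hsupp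
    by_cases hsub : f.1.support ⊆ {y}
    · -- a single variable
      have hfs : f.1 = Finsupp.single y (f.1 y) := Finsupp.support_subset_singleton.mp hsub
      have hwn : monoWeight f.1 = f.1 y := by
        rw [hfs]
        simp [monoWeight_single]
      have hn2 : 2 ≤ f.1 y := by omega
      have hyeven : E.evenVar y := by
        by_contra hodd
        have := f.2 y hodd
        omega
      by_cases hpow : ∃ i : ℕ, f.1 y = p ^ i
      · obtain ⟨i, hi⟩ := hpow
        have hi1 : 1 ≤ i := by
          rcases Nat.eq_zero_or_pos i with rfl | h
          · simp at hi; omega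
          · exact h
        refine Submodule.mem_sup_right ?_
        rw [hP]
        exact Submodule.subset_span ⟨y, i, f, hyeven, hi1, by rw [hfs, hi], rfl⟩
      · push_neg at hpow
        obtain ⟨a, ha0, han, hnd⟩ := exists_choose_not_dvd hp hn2 hpow
        have hcon1 : ∀ z : E.Y, ¬ E.evenVar z → (Finsupp.single y a) z ≤ 1 := by
          intro z hz
          rcases eq_or_ne z y with rfl | hzz
          · exact absurd hyeven hz
          · simp [Finsupp.single_eq_of_ne' (Ne.symm hzz)]
        have hcon2 : ∀ z : E.Y, ¬ E.evenVar z → (Finsupp.single y (f.1 y - a)) z ≤ 1 := by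
          intro z hz
          rcases eq_or_ne z y with rfl | hzz
          · exact absurd hyeven hz
          · simp [Finsupp.single_eq_of_ne' (Ne.symm hzz)]
        have hmul := E.mul_single y hyeven a (f.1 y - a)
          ⟨Finsupp.single y a, hcon1⟩ ⟨Finsupp.single y (f.1 y - a), hcon2⟩ f rfl rfl
          (by rw [hfs]; simp only [Finsupp.single_eq_same]; congr 1; omega)
        obtain ⟨u, hu⟩ := isUnit_natCast_of_not_dvd (R := R) (p := p) hnd
        have hch : a + (f.1 y - a) = f.1 y := by omega
        have heq : (↑u⁻¹ : R) •
            (E.basis ⟨Finsupp.single y a, hcon1⟩ * E.basis ⟨Finsupp.single y (f.1 y - a), hcon2⟩)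
            = E.basis f := by
          rw [hmul, ← Int.cast_smul_eq_zsmul R, smul_smul]
          rw [hch]
          have : ((((f.1 y).choose a : ℕ) : ℤ) : R) = ((f.1 y).choose a : R) := by push_cast; ring
          rw [this, ← hu, Units.inv_mul, one_smul]
        refine Submodule.mem_sup_left ?_
        rw [hDind]
        rw [← heq]
        refine Submodule.smul_mem _ _ (Submodule.mem_sup_right (Submodule.subset_span ?_))
        refine ⟨⟨Finsupp.single y a, hcon1⟩, ⟨Finsupp.single y (f.1 y - a), hcon2⟩, ?_, ?_, rfl⟩
        · show 1 ≤ monoWeight (Finsupp.single y a)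
          rw [monoWeight_single]; omega
        · show 1 ≤ monoWeight (Finsupp.single y (f.1 y - a))
          rw [monoWeight_single]; omega
    · -- at least two variables: split off y
      have hz : ∃ z ∈ f.1.support, z ≠ y := by
        by_contra hno
        push_neg at hno
        exact hsub fun t ht => Finset.mem_singleton.mpr (hno t ht)
      obtain ⟨z, hzs, hzy⟩ := hz
      have hcon1 : ∀ t : E.Y, ¬ E.evenVar t → (Finsupp.single y (f.1 y)) t ≤ 1 := by
        intro t ht
        rcases eq_or_ne t y with rfl | htt
        · rw [Finsupp.single_eq_same]; exact f.2 t ht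
        · simp [Finsupp.single_eq_of_ne' (Ne.symm htt)]
      have hcon2 : ∀ t : E.Y, ¬ E.evenVar t → (f.1.erase y) t ≤ 1 := by
        intro t ht
        rcases eq_or_ne t y with rfl | htt
        · simp [Finsupp.erase_same]
        · rw [Finsupp.erase_ne htt]; exact f.2 t ht
      set f₁ : NormalMono E.Y E.evenVar := ⟨Finsupp.single y (f.1 y), hcon1⟩ with hf₁
      set f₂ : NormalMono E.Y E.evenVar := ⟨f.1.erase y, hcon2⟩ with hf₂
      have hdisj : Disjoint f₁.1.support f₂.1.support := by
        rw [Finset.disjoint_left]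
        intro t ht1 ht2
        have h1 : t = y := by
          have := Finsupp.support_single_subset ht1
          simpa using this
        rw [hf₂] at ht2
        simp only [Finsupp.support_erase, Finset.mem_erase] at ht2
        exact ht2.1 h1
      have hsum : f.1 = f₁.1 + f₂.1 := (Finsupp.single_add_erase y f.1).symm
      obtain ⟨c, hc⟩ := E.mul_disjoint f₁ f₂ f hdisj hsum
      have heq : ((c⁻¹ : ℤˣ) : ℤ) • (E.basis f₁ * E.basis f₂) = E.basis f := by
        rw [hc, smul_smul, ← Units.val_mul, inv_mul_cancel, Units.val_one, one_smul]
      refine Submodule.mem_sup_left ?_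
      rw [hDind, ← heq]
      refine zsmul_mem (Submodule.mem_sup_right (Submodule.subset_span ?_)) _
      refine ⟨f₁, f₂, ?_, ?_, rfl⟩
      · have : f.1 y ≤ monoWeight f₁.1 := by
          rw [hf₁, monoWeight_single]
        have hy1 : 1 ≤ f.1 y := Finsupp.mem_support_iff.mp hy |>.bot_lt
        omega
      · have h1 : f₂.1 z = f.1 z := Finsupp.erase_ne hzy
        have h2 : 1 ≤ f.1 z := Nat.pos_of_ne_zero (Finsupp.mem_support_iff.mp hzs)
        have h3 := le_monoWeight f₂.1 z
        omega
  refine ⟨key1, ?_, ?_⟩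
  · -- Dind ⊔ P = DGind
    apply le_antisymm
    · refine sup_le key1 ?_
      rw [hP, hDGind, Submodule.span_le]
      rintro x ⟨y, i, f, hyy, hi, hf, rfl⟩
      refine Submodule.mem_sup_right (Submodule.subset_span ⟨f, ?_, rfl⟩)
      rw [hf, monoWeight_single]
      have : p ≤ p ^ i := Nat.le_self_pow (by omega) p
      omega
    · rw [hDGind]
      refine sup_le ?_ ?_
      · exact le_trans (hDind ▸ le_sup_left) le_sup_left
      · rw [Submodule.span_le]
        rintro x ⟨f, hf, rfl⟩
        exact keyGen f hf
  · -- P ⊓ Dind ≤ m • P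
    set S : Set (NormalMono E.Y E.evenVar) :=
      {h | ∃ (y : E.Y) (i : ℕ), E.evenVar y ∧ 1 ≤ i ∧ h.1 = Finsupp.single y (p ^ i)} with hS
    have hPS : P = Submodule.span R (E.basis '' S) := by
      rw [hP]; congr 1; ext x
      constructor
      · rintro ⟨y, i, f, hyy, hi, hf, rfl⟩
        exact ⟨f, ⟨y, i, hyy, hi, hf⟩, rfl⟩
      · rintro ⟨f, ⟨y, i, hyy, hi, hf⟩, rfl⟩
        exact ⟨y, i, f, hyy, hi, hf, rfl⟩
    intro x hx
    obtain ⟨hxP, hxD⟩ := Submodule.mem_inf.mp hx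
    have hsupp : ↑(E.basis.repr x).support ⊆ S :=
      E.basis.mem_span_image.mp (hPS ▸ hxP)
    have hcoeff : ∀ h ∈ S, E.basis.repr x h ∈ maximalIdeal R := by
      intro h hh
      obtain ⟨y, i, hyy, hi, hhs⟩ := hh
      set L : A →ₗ[R] R :=
        (Finsupp.lapply h).comp (E.basis.repr : A →ₗ[R] (NormalMono E.Y E.evenVar →₀ R)) with hL
      have hDQ : Dind ≤ Submodule.comap L (maximalIdeal R) := by
        rw [hDind]
        refine sup_le ?_ ?_
        · rw [hmRA]
          refine Submodule.smul_le.mpr ?_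
          intro r hr a _
          simp only [Submodule.mem_comap, map_smul, smul_eq_mul]
          exact Ideal.mul_mem_right _ _ hr
        · rw [Submodule.span_le]
          rintro x' ⟨f, g, hf, hg, rfl⟩
          simp only [SetLike.mem_coe, Submodule.mem_comap]
          by_cases hfg : f.1 + g.1 = h.1
          · have hf1 : f.1 = Finsupp.single y (f.1 y) :=
              add_eq_single_left (hfg.trans hhs)
            have hg1 : g.1 = Finsupp.single y (g.1 y) :=
              add_eq_single_left ((add_comm g.1 f.1 ▸ hfg).trans hhs)
            have hab : f.1 y + g.1 y = p ^ i := by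
              have h1 := DFunLike.congr_fun (hfg.trans hhs) y
              simpa [Finsupp.add_apply] using h1
            have ha1 : 1 ≤ f.1 y := by
              rw [hf1, monoWeight_single] at hf; exact hf
            have hb1 : 1 ≤ g.1 y := by
              rw [hg1, monoWeight_single] at hg; exact hg
            have hmul := E.mul_single y hyy (f.1 y) (g.1 y) f g h hf1 hg1 (by rw [hhs, hab])
            rw [hmul, map_zsmul]
            have hLbh : L (E.basis h) = 1 := by
              simp [hL, Module.Basis.repr_self]
            rw [hLbh]
            have hdvd : p ∣ (f.1 y + g.1 y).choose (f.1 y) := by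
              rw [hab]
              exact hp.dvd_choose_pow (by omega) (by omega)
            have hcast : (((f.1 y + g.1 y).choose (f.1 y) : ℤ)) • (1 : R)
                = (((f.1 y + g.1 y).choose (f.1 y) : ℕ) : R) := by
              rw [zsmul_eq_mul]; push_cast; ring
            rw [hcast]
            exact natCast_mem_maximalIdeal hdvd
          · by_cases hex : ∃ h' : NormalMono E.Y E.evenVar, h'.1 = f.1 + g.1
            · obtain ⟨h', hh'⟩ := hex
              obtain ⟨c, hc⟩ := E.mul_basis f g h' hh'
              have hne : h' ≠ h := by
                intro e
                exact hfg (by rw [← e, hh'])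
              rw [hc, map_zsmul]
              have : L (E.basis h') = 0 := by
                simp [hL, Module.Basis.repr_self, Finsupp.single_eq_of_ne' hne]
              rw [this, smul_zero]
              exact Submodule.zero_mem _
            · push_neg at hex
              rw [E.mul_basis_zero f g hex, map_zero]
              exact Submodule.zero_mem _
      have := hDQ hxD
      simpa [hL] using this
    have hx' : x = (E.basis.repr x).sum fun h c => c • E.basis h := by
      conv_lhs => rw [← E.basis.linearCombination_repr x]
      rw [Finsupp.linearCombination_apply]
    rw [hx']; unfold Finsupp.sum
    refine Submodule.sum_mem _ ?_
    intro h hh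
    refine Submodule.smul_mem_smul (hcoeff h (hsupp hh)) ?_
    rw [hPS]
    exact Submodule.subset_span ⟨h, hsupp hh, rfl⟩
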